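/- Let A and B be n×n real positive semidefinite matrices with unit trace, tr(A) = tr(B) = 1. Then the Fréchet task distance (1/√2)·‖A^{1/2} − B^{1/2}‖_F equals 1 if and only if A·B = 0. -/

import Mathlib

open Matrix

/-- The Frobenius norm of a real square matrix: the square root of the sum of
squares of all entries. -/
noncomputable def frobeniusNorm {n : ℕ} (M : Matrix (Fin n) (Fin n) ℝ) : ℝ :=
  Real.sqrt (∑ i, ∑ j, (M i j) ^ 2)
noncomputable def Matrix.PosSemidef.sqrt {m 𝕜 : Type*} [Fintype m] [DecidableEq m] [RCLike 𝕜]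
    [PartialOrder 𝕜] [StarOrderedRing 𝕜]
    {A : Matrix m m 𝕜} (hA : A.PosSemidef) : Matrix m m 𝕜 :=
  hA.1.eigenvectorUnitary.1 * Matrix.diagonal ((↑) ∘ (√·) ∘ hA.1.eigenvalues) *
  (star hA.1.eigenvectorUnitary : Matrix m m 𝕜)

theorem Matrix.PosSemidef.sqrt_mul_self {n : ℕ} {A : Matrix (Fin n) (Fin n) ℝ}
    (hA : A.PosSemidef) : hA.sqrt * hA.sqrt = A := by
  have hU : (star hA.1.eigenvectorUnitary : Matrix (Fin n) (Fin n) ℝ) *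
      (hA.1.eigenvectorUnitary : Matrix (Fin n) (Fin n) ℝ) = 1 := Unitary.coe_star_mul_self _
  have hD : Matrix.diagonal (RCLike.ofReal ∘ (√·) ∘ hA.1.eigenvalues : Fin n → ℝ) *
      Matrix.diagonal (RCLike.ofReal ∘ (√·) ∘ hA.1.eigenvalues : Fin n → ℝ) =
      Matrix.diagonal (RCLike.ofReal ∘ hA.1.eigenvalues : Fin n → ℝ) := by
    rw [Matrix.diagonal_mul_diagonal]
    congr 1; funext i
    simp [Real.mul_self_sqrt (hA.eigenvalues_nonneg i)]
  conv_rhs => rw [hA.1.spectral_theorem]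
  rw [Unitary.conjStarAlgAut_apply, Matrix.PosSemidef.sqrt]
  rw [show ∀ a b c : Matrix (Fin n) (Fin n) ℝ, a * b * c * (a * b * c) = a * b * (c * a) * b * c
    from fun a b c => by noncomm_ring, hU, Matrix.mul_one, ← hD]
  simp only [Matrix.mul_assoc]

theorem Matrix.PosSemidef.posSemidef_sqrt {n : ℕ} {A : Matrix (Fin n) (Fin n) ℝ}
    (hA : A.PosSemidef) : hA.sqrt.PosSemidef := by
  unfold Matrix.PosSemidef.sqrt
  have h := (Matrix.PosSemidef.diagonal (R := ℝ) (n := Fin n)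
    (d := (↑) ∘ (√·) ∘ hA.1.eigenvalues) (fun i => by simp [Real.sqrt_nonneg])).mul_mul_conjTranspose_same
    (hA.1.eigenvectorUnitary : Matrix (Fin n) (Fin n) ℝ)
  exact h

lemma trace_transpose_mul_eq {n : ℕ} (M : Matrix (Fin n) (Fin n) ℝ) :
    (Mᵀ * M).trace = ∑ i, ∑ j, (M i j) ^ 2 := by
  simp [Matrix.trace, Matrix.mul_apply, Matrix.diag, sq]
  exact Finset.sum_comm

lemma eq_zero_of_trace_transpose_mul {n : ℕ} (M : Matrix (Fin n) (Fin n) ℝ)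
    (h : (Mᵀ * M).trace = 0) : M = 0 := by
  rw [trace_transpose_mul_eq] at h
  ext i j
  have h1 := (Finset.sum_eq_zero_iff_of_nonneg (fun i _ =>
    Finset.sum_nonneg (fun j _ => sq_nonneg (M i j)))).mp h i (Finset.mem_univ i)
  have h2 := (Finset.sum_eq_zero_iff_of_nonneg (fun j _ => sq_nonneg (M i j))).mp h1 j
    (Finset.mem_univ j)
  simpa using pow_eq_zero_iff (n := 2) (by norm_num) |>.mp h2

lemma psd_mul_eq_zero_of_trace {n : ℕ} {X Y : Matrix (Fin n) (Fin n) ℝ}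
    (hX : X.PosSemidef) (hY : Y.PosSemidef) (h : (X * Y).trace = 0) : X * Y = 0 := by
  set S := hX.sqrt with hSdef
  set T := hY.sqrt with hTdef
  have hS : S * S = X := hX.sqrt_mul_self
  have hT : T * T = Y := hY.sqrt_mul_self
  have hSt : Sᵀ = S := hX.posSemidef_sqrt.isHermitian.eq
  have hTt : Tᵀ = T := hY.posSemidef_sqrt.isHermitian.eq
  clear_value S T
  clear hSdef hTdef
  have key : ((T * S)ᵀ * (T * S)).trace = 0 := by
    have e1 : (T * S)ᵀ * (T * S) = S * (T * T) * S := by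
      rw [Matrix.transpose_mul, hSt, hTt]; noncomm_ring
    have e2 : (X * Y).trace = (S * (T * T) * S).trace := by
      rw [← hS, ← hT, show S * S * (T * T) = S * (S * (T * T)) by noncomm_ring,
        Matrix.trace_mul_comm]
    rw [e1, ← e2, h]
  have hTS : T * S = 0 := eq_zero_of_trace_transpose_mul _ key
  have hST : S * T = 0 := by
    have := congrArg Matrix.transpose hTS
    rwa [Matrix.transpose_mul, hSt, hTt, Matrix.transpose_zero] at this
  calc X * Y = S * (S * T) * T := by rw [← hS, ← hT]; noncomm_ring
    _ = 0 := by rw [hST]; simp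

/-- For `n × n` real positive semidefinite matrices `A`, `B` with unit trace,
the Fréchet task distance `(1/√2) ‖A^{1/2} − B^{1/2}‖_F` equals one if and only if
`A * B = 0`. -/
theorem frechet_distance_eq_one_iff {n : ℕ} {A B : Matrix (Fin n) (Fin n) ℝ}
    (hA : A.PosSemidef) (hB : B.PosSemidef)
    (htrA : A.trace = 1) (htrB : B.trace = 1) :
    (1 / Real.sqrt 2) * frobeniusNorm (hA.sqrt - hB.sqrt) = 1 ↔ A * B = 0 := by
  set S := hA.sqrt with hSdef
  set T := hB.sqrt with hTdef
  have hS : S * S = A := hA.sqrt_mul_self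
  have hT : T * T = B := hB.sqrt_mul_self
  have hSpsd : S.PosSemidef := hA.posSemidef_sqrt
  have hTpsd : T.PosSemidef := hB.posSemidef_sqrt
  have hSt : Sᵀ = S := hSpsd.isHermitian.eq
  have hTt : Tᵀ = T := hTpsd.isHermitian.eq
  clear_value S T
  clear hSdef hTdef
  set t := (S * T).trace with htdef
  set q := ∑ i, ∑ j, ((S - T) i j) ^ 2 with hqdef
  have hq0 : 0 ≤ q := Finset.sum_nonneg fun i _ => Finset.sum_nonneg fun j _ => sq_nonneg _
  have htTS : (T * S).trace = t := Matrix.trace_mul_comm T S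
  have hqval : q = 2 - 2 * t := by
    have e : (S - T)ᵀ * (S - T) = S * S - S * T - T * S + T * T := by
      rw [Matrix.transpose_sub, hSt, hTt]; noncomm_ring
    have := trace_transpose_mul_eq (S - T)
    rw [e] at this
    simp only [Matrix.trace_add, Matrix.trace_sub] at this
    rw [hS, hT, htrA, htrB, htTS, ← htdef] at this
    rw [hqdef, ← this]; ring
  have hsqrt2 : Real.sqrt 2 ≠ 0 := by positivity
  have step1 : (1 / Real.sqrt 2) * frobeniusNorm (S - T) = 1 ↔ t = 0 := by
    rw [frobeniusNorm, ← hqdef]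
    rw [div_mul_eq_mul_div, one_mul, div_eq_one_iff_eq hsqrt2,
      Real.sqrt_inj hq0 (by norm_num), hqval]
    constructor <;> intro h <;> linarith
  rw [step1]
  constructor
  · intro ht
    have hST : S * T = 0 := psd_mul_eq_zero_of_trace hSpsd hTpsd ht
    calc A * B = S * (S * T) * T := by rw [← hS, ← hT]; noncomm_ring
      _ = 0 := by rw [hST]; simp
  · intro hAB
    have htr : (A * B).trace = 0 := by rw [hAB, Matrix.trace_zero]
    have key : ((T * S)ᵀ * (T * S)).trace = 0 := by
      have e1 : (T * S)ᵀ * (T * S) = S * (T * T) * S := by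
        rw [Matrix.transpose_mul, hSt, hTt]; noncomm_ring
      have e2 : (A * B).trace = (S * (T * T) * S).trace := by
        rw [← hS, ← hT, show S * S * (T * T) = S * (S * (T * T)) by noncomm_ring,
          Matrix.trace_mul_comm]
      rw [e1, ← e2, htr]
    have hTS : T * S = 0 := eq_zero_of_trace_transpose_mul _ key
    have hST : S * T = 0 := by
      have := congrArg Matrix.transpose hTS
      rwa [Matrix.transpose_mul, hSt, hTt, Matrix.transpose_zero] at this
    rw [htdef, hST, Matrix.trace_zero]
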